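/- If Σ ∈ ℝ^{k×k} is symmetric positive definite, then the matrix Λ(Σ) ∈ ℝ^{(k+1)×(k+1)} defined by Λ(Σ)_{00} = 0, Λ(Σ)_{0i} = Λ(Σ)_{i0} = Σ_{ii}/4 and Λ(Σ)_{ij} = (Σ_{ii} + Σ_{jj} - 2Σ_{ij})/4 for 1 ≤ i,j ≤ k is symmetric with zero diagonal and strictly conditionally negative definite (xᵀΛ(Σ)x < 0 for all nonzero x with Σ_i x_i = 0). -/

import Mathlib

open Matrix Finset

/-- The matrix `Λ(Σ)` built from a symmetric positive definite `Σ`. -/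
noncomputable def LamOf (k : ℕ) (S : Matrix (Fin k) (Fin k) ℝ) :
    Matrix (Fin (k + 1)) (Fin (k + 1)) ℝ :=
  Matrix.of fun i j =>
    Fin.cases
      (Fin.cases 0 (fun j' => S j' j' / 4) j)
      (fun i' => Fin.cases (S i' i' / 4)
        (fun j' => (S i' i' + S j' j' - 2 * S i' j') / 4) j) i

/-- If `Σ` is symmetric positive definite, then `Λ(Σ)` is symmetric with zero diagonal
and strictly conditionally negative definite. -/
theorem LamOf_conditionally_negative_definite (k : ℕ)
    (S : Matrix (Fin k) (Fin k) ℝ) (hS : S.PosDef) :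
    (∀ i j, LamOf k S i j = LamOf k S j i) ∧
    (∀ i, LamOf k S i i = 0) ∧
    (∀ x : Fin (k + 1) → ℝ, x ≠ 0 → ∑ i, x i = 0 →
      ∑ i, ∑ j, x i * LamOf k S i j * x j < 0) := by
  classical
  have hSsymm : ∀ i j, S i j = S j i := by
    intro i j
    have := hS.1
    have h := congrFun (congrFun this j) i
    simpa [Matrix.conjTranspose_apply] using h
  set T : Matrix (Fin (k+1)) (Fin (k+1)) ℝ :=
    Matrix.of (fun i j => Fin.cases 0 (fun i' => Fin.cases 0 (fun j' => S i' j') j) i)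
    with hT
  have lam_eq : ∀ i j, LamOf k S i j = (T i i + T j j - 2 * T i j) / 4 := by
    intro i j
    induction i using Fin.cases <;> induction j using Fin.cases <;>
      simp [LamOf, hT]
  refine ⟨?_, ?_, ?_⟩
  · intro i j
    rw [lam_eq, lam_eq]
    have : T i j = T j i := by
      induction i using Fin.cases <;> induction j using Fin.cases <;>
        simp [hT, hSsymm]
    rw [this]; ring
  · intro i
    rw [lam_eq]; ring
  · intro x hx hsum
    set y : Fin k → ℝ := fun i => x i.succ with hy
    have hy0 : y ≠ 0 := by
      intro h
      apply hx
      funext i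
      induction i using Fin.cases with
      | zero =>
        have := hsum
        rw [Fin.sum_univ_succ] at this
        have hz : ∑ i : Fin k, x i.succ = 0 := by
          simp only [← hy]; rw [h]; simp
        simpa [hz] using this
      | succ i' =>
        have := congrFun h i'
        simpa [hy] using this
    have hpos : 0 < ∑ i, ∑ j, y i * S i j * y j := by
      have := hS.dotProduct_mulVec_pos hy0
      have heq : star y ⬝ᵥ S *ᵥ y = ∑ i, ∑ j, y i * S i j * y j := by
        simp [dotProduct, Matrix.mulVec, Finset.mul_sum, mul_assoc]
      rw [heq] at this
      simpa using this
    have hTsum : ∑ i, ∑ j, x i * T i j * x j = ∑ i, ∑ j, y i * S i j * y j := by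
      rw [Fin.sum_univ_succ]
      have h0 : ∑ j, x 0 * T 0 j * x j = 0 := by
        apply Finset.sum_eq_zero; intro j _
        induction j using Fin.cases <;> simp [hT]
      rw [h0, zero_add]
      apply Finset.sum_congr rfl
      intro i' _
      rw [Fin.sum_univ_succ]
      simp [hT, hy]
    -- main computation
    have key : ∑ i, ∑ j, x i * LamOf k S i j * x j
        = -(1/2) * ∑ i, ∑ j, x i * T i j * x j := by
      have expand : ∀ i j, x i * LamOf k S i j * x j
          = (x i * (T i i / 4)) * x j + x i * ((T j j / 4) * x j)
            + (-(1/2 : ℝ)) * (x i * T i j * x j) := by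
        intro i j; rw [lam_eq]; ring
      have e1 : ∑ i, ∑ j, (x i * (T i i / 4)) * x j = 0 := by
        apply Finset.sum_eq_zero; intro i _
        rw [← Finset.mul_sum, hsum, mul_zero]
      have e2 : ∑ i, ∑ j, x i * ((T j j / 4) * x j) = 0 := by
        simp_rw [← Finset.mul_sum]
        rw [← Finset.sum_mul, hsum, zero_mul]
      have e3 : ∑ i, ∑ j, (-(1/2 : ℝ)) * (x i * T i j * x j)
          = -(1/2) * ∑ i, ∑ j, x i * T i j * x j := by
        simp_rw [← Finset.mul_sum]
      calc ∑ i, ∑ j, x i * LamOf k S i j * x j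
          = ∑ i, ∑ j, ((x i * (T i i / 4)) * x j + x i * ((T j j / 4) * x j)
              + (-(1/2 : ℝ)) * (x i * T i j * x j)) := by simp_rw [expand]
        _ = (∑ i, ∑ j, (x i * (T i i / 4)) * x j)
            + (∑ i, ∑ j, x i * ((T j j / 4) * x j))
            + ∑ i, ∑ j, (-(1/2 : ℝ)) * (x i * T i j * x j) := by
              simp_rw [Finset.sum_add_distrib]
        _ = -(1/2) * ∑ i, ∑ j, x i * T i j * x j := by rw [e1, e2, e3]; ring
    rw [key, hTsum]
    nlinarith [hpos]
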